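/- In the power allocation game with α_i > 0 and λ_i > 0 for all i, define the M×M matrix Q by Q_{p,p} = α_p·W and, for p ≠ q, Q_{p,q} = −α_p·W·(a_{p,q}/a_{q,q})·(1 + σ^{−2}·∑_{i=1}^M a_{q,i}·p_i^max), and suppose Q is a P-matrix. Given any initial profile p^{(0)} ∈ P, define the parallel-update sequence by p^{(s+1)}_i = [α_i·W/λ_i − 1/g_i(p^{(s)})]_0^{p_i^max} for every i ∈ {1,…,M} and s ≥ 0. Then the sequence (p^{(s)})_{s≥0} converges, and its limit is the unique Nash equilibrium of the game. -/

import Mathlib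

open Finset

/-- Equivalent channel gain of player `i` under power profile `p`:
`g_i(p) = a_{i,i} / (∑_{ℓ ≠ i} a_{i,ℓ}·p_ℓ + σ²)`. -/
noncomputable def gain (M : ℕ) (σ2 : ℝ) (a : Fin M → Fin M → ℝ)
    (p : Fin M → ℝ) (i : Fin M) : ℝ :=
  a i i / ((∑ ℓ ∈ Finset.univ.erase i, a i ℓ * p ℓ) + σ2)

/-- Payoff of player `i`: `φ_i(p) = α_i·W·log(1 + g_i(p)·p_i) − λ_i·p_i`. -/
noncomputable def payoff (M : ℕ) (W σ2 : ℝ) (α lam : Fin M → ℝ)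
    (a : Fin M → Fin M → ℝ) (p : Fin M → ℝ) (i : Fin M) : ℝ :=
  α i * W * Real.log (1 + gain M σ2 a p i * p i) - lam i * p i

/-- The joint strategy set `P = ∏_{i=1}^M [0, p_i^max]`. -/
def stratBox (M : ℕ) (pmax : Fin M → ℝ) : Set (Fin M → ℝ) :=
  {p | ∀ i, p i ∈ Set.Icc (0 : ℝ) (pmax i)}

/-- `p` is a Nash equilibrium: no player can improve its payoff by unilaterally
changing its own power within `[0, p_i^max]`. -/
def IsNE (M : ℕ) (W σ2 : ℝ) (α lam pmax : Fin M → ℝ)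
    (a : Fin M → Fin M → ℝ) (p : Fin M → ℝ) : Prop :=
  ∀ i, ∀ q ∈ Set.Icc (0 : ℝ) (pmax i),
    payoff M W σ2 α lam a (Function.update p i q) i ≤ payoff M W σ2 α lam a p i


/-- The matrix `Q` of Theorem 1. -/
noncomputable def Qmat (M : ℕ) (W σ2 : ℝ) (α pmax : Fin M → ℝ)
    (a : Fin M → Fin M → ℝ) : Matrix (Fin M) (Fin M) ℝ :=
  fun p q =>
    if p = q then α p * W
    else -(α p * W * (a p q / a q q) * (1 + σ2⁻¹ * ∑ i, a q i * pmax i))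

/-- A real square matrix is a P-matrix if every principal minor is positive. -/
def IsPMatrix {n : ℕ} (A : Matrix (Fin n) (Fin n) ℝ) : Prop :=
  ∀ S : Finset (Fin n), S.Nonempty →
    0 < (A.submatrix (fun i : S => (i : Fin n)) (fun j : S => (j : Fin n))).det

/-- Euclidean projection of `x` onto the interval `[a, b]`. -/
noncomputable def euclidProj (a b x : ℝ) : ℝ := max a (min b x)

/-- **Proposition 3, convergence of the parallel updating
algorithm.** Suppose `α_i > 0`, `λ_i > 0` for all `i`, and `Q` is a P-matrix.
Then for every initial profile `p⁽⁰⁾ ∈ P`, the parallel-update sequence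
`p⁽ˢ⁺¹⁾_i = [α_i·W/λ_i − 1/g_i(p⁽ˢ⁾)]_0^{p_i^max}` converges, and its limit is the
unique Nash equilibrium of the game. -/
def PMinors {ι : Type} [Fintype ι] [DecidableEq ι] (A : Matrix ι ι ℝ) : Prop :=
  ∀ S : Finset ι, S.Nonempty →
    0 < (A.submatrix (fun i : S => (i : ι)) (fun j : S => (j : ι))).det

lemma pm_diag_pos {ι : Type} [Fintype ι] [DecidableEq ι] {A : Matrix ι ι ℝ}
    (hp : PMinors A) (i0 : ι) : 0 < A i0 i0 := by
  have h := hp {i0} (Finset.singleton_nonempty i0)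
  have hsub : Subsingleton (({i0} : Finset ι) : Type) := by
    constructor
    rintro ⟨x, hx⟩ ⟨y, hy⟩
    simp only [Finset.mem_singleton] at hx hy
    subst hx; subst hy; rfl
  rw [Matrix.det_eq_elem_of_subsingleton _ ⟨i0, Finset.mem_singleton_self i0⟩] at h
  simpa using h

lemma zp_aux : ∀ n : ℕ, ∀ (ι : Type) [Fintype ι] [DecidableEq ι],
    Fintype.card ι = n → ∀ A : Matrix ι ι ℝ,
    (∀ i j, i ≠ j → A i j ≤ 0) → PMinors A →
    ∃ d : ι → ℝ, (∀ i, 0 < d i) ∧ ∀ i, 0 < ∑ j, A i j * d j := by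
  intro n
  induction n with
  | zero =>
    intro ι _ _ hcard A _ _
    have : IsEmpty ι := Fintype.card_eq_zero_iff.mp hcard
    exact ⟨fun _ => 1, fun i => (this.false i).elim, fun i => (this.false i).elim⟩
  | succ n ih =>
    intro ι _ _ hcard A hz hp
    have hpos : 0 < Fintype.card ι := by omega
    obtain ⟨i0⟩ := Fintype.card_pos_iff.mp hpos
    have hA00 : 0 < A i0 i0 := pm_diag_pos hp i0
    have hcard' : Fintype.card {x : ι // x ≠ i0} = n := by
      have h1 : Fintype.card {x : ι // x = i0} = 1 := Fintype.card_subtype_eq i0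
      have h2 := Fintype.card_subtype_compl (fun x : ι => x = i0)
      simp only [h1] at h2
      have : Fintype.card {x : ι // ¬ x = i0} = Fintype.card ι - 1 := h2
      simpa [ne_eq] using this.trans (by omega)
    set B : Matrix {x : ι // x ≠ i0} {x : ι // x ≠ i0} ℝ :=
      fun x y => A x.1 y.1 - A x.1 i0 * A i0 y.1 / A i0 i0 with hB
    have hzB : ∀ i j : {x : ι // x ≠ i0}, i ≠ j → B i j ≤ 0 := by
      intro i j hij
      have h1 : A i.1 j.1 ≤ 0 := hz _ _ (fun h => hij (Subtype.ext h))
      have h2 : 0 ≤ A i.1 i0 * A i0 j.1 / A i0 i0 :=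
        div_nonneg (by nlinarith [hz i.1 i0 i.2, hz i0 j.1 (Ne.symm j.2)]) hA00.le
      simp only [hB]
      linarith
    have hpB : PMinors B := by
      intro S' hS'
      classical
      set emb : {x : ι // x ≠ i0} ↪ ι := ⟨Subtype.val, Subtype.val_injective⟩ with hemb
      set T : Finset ι := S'.map emb with hT
      set S : Finset ι := insert i0 T with hS
      have hmemT : ∀ x : {x : ι // x ≠ i0}, x ∈ S' → x.1 ∈ S := by
        intro x hx
        exact Finset.mem_insert_of_mem (Finset.mem_map_of_mem emb hx)
      have hSmem : ∀ (y : ι), y ∈ S → ∀ (h : y ≠ i0), (⟨y, h⟩ : {x : ι // x ≠ i0}) ∈ S' := by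
        intro y hy h
        rcases Finset.mem_insert.mp hy with h' | h'
        · exact absurd h' h
        · rcases Finset.mem_map.mp h' with ⟨z, hzS, hzy⟩
          have : z = ⟨y, h⟩ := Subtype.ext hzy
          rwa [this] at hzS
      let e : ((S' : Type) ⊕ Unit) ≃ (S : Type) :=
        { toFun := fun z => match z with
            | Sum.inl x => ⟨x.1.1, hmemT x.1 x.2⟩
            | Sum.inr _ => ⟨i0, Finset.mem_insert_self i0 T⟩
          invFun := fun y => if h : y.1 = i0 then Sum.inr () else
              Sum.inl ⟨⟨y.1, h⟩, hSmem y.1 y.2 h⟩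
          left_inv := by
            rintro (⟨⟨x, hx⟩, hxS⟩ | ⟨⟩)
            · simp [dif_neg hx]
            · simp
          right_inv := by
            rintro ⟨y, hy⟩
            by_cases h : y = i0
            · subst h; simp
            · simp [dif_neg h] }
      set D : Matrix Unit Unit ℝ := Matrix.of (fun _ _ => A i0 i0) with hD
      have hDdet : D.det = A i0 i0 := Matrix.det_eq_elem_of_subsingleton _ ()
      haveI : Invertible D := D.invertibleOfIsUnitDet
        (by rw [hDdet]; exact isUnit_iff_ne_zero.mpr hA00.ne')
      have hdet := hp S ⟨i0, Finset.mem_insert_self i0 T⟩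
      have hre : (A.submatrix (fun i : S => (i : ι)) (fun j : S => (j : ι))).det
          = (Matrix.fromBlocks
              (A.submatrix (fun x : S' => x.1.1) (fun y : S' => y.1.1))
              (Matrix.of fun (x : S') (_ : Unit) => A x.1.1 i0)
              (Matrix.of fun (_ : Unit) (y : S') => A i0 y.1.1)
              D).det := by
        rw [← Matrix.det_submatrix_equiv_self e]
        congr 1
        ext z w
        rcases z with x | u <;> rcases w with y | v <;> rfl
      have hinv : (⅟D : Matrix Unit Unit ℝ) = Matrix.of (fun _ _ => (A i0 i0)⁻¹) := by
        rw [Matrix.invOf_eq_nonsing_inv, Matrix.inv_def, Matrix.adjugate_subsingleton, hDdet,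
          Ring.inverse_eq_inv]
        ext u v
        simp [Matrix.one_apply]
      have hSchur : (A.submatrix (fun x : S' => x.1.1) (fun y : S' => y.1.1))
          - (Matrix.of fun (x : S') (_ : Unit) => A x.1.1 i0) * (⅟D) *
            (Matrix.of fun (_ : Unit) (y : S') => A i0 y.1.1)
          = B.submatrix (fun i : S' => (i : {x : ι // x ≠ i0}))
              (fun j : S' => (j : {x : ι // x ≠ i0})) := by
        ext x y
        simp only [hinv, Matrix.mul_apply, hB, Matrix.sub_apply, Matrix.submatrix_apply,
          Matrix.of_apply, Finset.univ_unique, Finset.sum_singleton]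
        show _ = A x.1.1 y.1.1 - A x.1.1 i0 * A i0 y.1.1 / A i0 i0
        rw [div_eq_mul_inv]
        ring
      rw [hre, Matrix.det_fromBlocks₂₂, hDdet, hSchur] at hdet
      nlinarith [hdet, hA00]
    obtain ⟨d', hd'pos, hd'⟩ := ih {x : ι // x ≠ i0} hcard' B hzB hpB
    classical
    set t : ℝ := ∑ y : {x : ι // x ≠ i0}, A i0 y.1 * d' y with ht
    have htnonpos : t ≤ 0 := Finset.sum_nonpos (fun y _ =>
      mul_nonpos_of_nonpos_of_nonneg (hz i0 y.1 (Ne.symm y.2)) (hd'pos y).le)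
    set K : ℝ := (∑ x : {x : ι // x ≠ i0}, |A x.1 i0|) + 1 with hK
    have hKpos : 0 < K := by positivity
    have hK1 : ∀ x : {x : ι // x ≠ i0}, -A x.1 i0 ≤ K - 1 := by
      intro x
      have h1 : |A x.1 i0| ≤ ∑ y : {x : ι // x ≠ i0}, |A y.1 i0| :=
        Finset.single_le_sum (f := fun y : {x : ι // x ≠ i0} => |A y.1 i0|)
          (fun y _ => abs_nonneg _) (Finset.mem_univ x)
      have h2 := neg_le_abs (A x.1 i0)
      simp only [hK]
      linarith
    set F : Finset ℝ := insert 1 (Finset.univ.image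
      (fun x : {x : ι // x ≠ i0} => (∑ y, B x y * d' y) / K)) with hF
    have hFne : F.Nonempty := ⟨1, Finset.mem_insert_self _ _⟩
    set ε : ℝ := F.min' hFne with hε
    have hεpos : 0 < ε := by
      have hmem := Finset.min'_mem F hFne
      have hall : ∀ z ∈ F, 0 < z := by
        intro z hzF
        rcases Finset.mem_insert.mp hzF with rfl | hzF
        · norm_num
        · rcases Finset.mem_image.mp hzF with ⟨x, _, rfl⟩
          exact div_pos (hd' x) hKpos
      exact hall _ hmem
    have hεle : ∀ x : {x : ι // x ≠ i0}, ε ≤ (∑ y, B x y * d' y) / K := fun x =>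
      Finset.min'_le _ _ (Finset.mem_insert_of_mem (Finset.mem_image_of_mem _ (Finset.mem_univ x)))
    set dd : ι → ℝ := fun i => if h : i = i0 then ε + (-t) / (A i0 i0) else d' ⟨i, h⟩ with hdd
    have hddi0 : dd i0 = ε + (-t) / (A i0 i0) := by simp [hdd]
    have hddne : ∀ y : {x : ι // x ≠ i0}, dd y.1 = d' y := by
      intro y
      simp only [hdd, dif_neg y.2]
    have hsplit : ∀ f : ι → ℝ, ∑ j, f j = f i0 + ∑ y : {x : ι // x ≠ i0}, f y.1 := by
      intro f
      rw [← Finset.sum_subtype (Finset.univ.erase i0)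
        (by intro x; simp [Finset.mem_erase]) f]
      exact (Finset.add_sum_erase _ f (Finset.mem_univ i0)).symm
    refine ⟨dd, ?_, ?_⟩
    · intro i
      by_cases h : i = i0
      · rw [h, hddi0]
        have h2 : 0 ≤ (-t) / (A i0 i0) := div_nonneg (neg_nonneg.mpr htnonpos) hA00.le
        linarith
      · simp only [hdd, dif_neg h]
        exact hd'pos _
    · intro i
      by_cases h : i = i0
      · rw [h, hsplit (fun j => A i0 j * dd j)]
        have hrest : ∑ y : {x : ι // x ≠ i0}, A i0 y.1 * dd y.1 = t := by
          rw [ht]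
          exact Finset.sum_congr rfl (fun y _ => by rw [hddne y])
        rw [hrest, hddi0]
        have hAne : A i0 i0 ≠ 0 := hA00.ne'
        have hexp : A i0 i0 * (ε + -t / A i0 i0) + t = A i0 i0 * ε := by field_simp; ring
        rw [hexp]
        exact mul_pos hA00 hεpos
      · rw [hsplit (fun j => A i j * dd j)]
        have hrest : ∑ y : {x : ι // x ≠ i0}, A i y.1 * dd y.1
            = ∑ y : {x : ι // x ≠ i0}, A i y.1 * d' y :=
          Finset.sum_congr rfl (fun y _ => by rw [hddne y])
        set x : {x : ι // x ≠ i0} := ⟨i, h⟩ with hx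
        have hBsum : ∑ y : {x : ι // x ≠ i0}, A i y.1 * d' y
            = (∑ y, B x y * d' y) + (A i i0 / A i0 i0) * t := by
          rw [ht, Finset.mul_sum, ← Finset.sum_add_distrib]
          apply Finset.sum_congr rfl
          intro y _
          simp only [hB, hx]
          field_simp
          ring
        rw [hrest, hBsum, hddi0]
        have hAne : A i0 i0 ≠ 0 := hA00.ne'
        have hexp : A i i0 * (ε + -t / A i0 i0) + ((∑ y, B x y * d' y) + A i i0 / A i0 i0 * t)
            = (∑ y, B x y * d' y) + A i i0 * ε := by
          field_simp
          ring
        rw [hexp]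
        have hSx : 0 < ∑ y, B x y * d' y := hd' x
        have h1 : ε * K ≤ ∑ y, B x y * d' y := (le_div_iff₀ hKpos).mp (hεle x)
        have h2 : -A i i0 ≤ K - 1 := hK1 x
        nlinarith [mul_le_mul_of_nonneg_left h2 hεpos.le]

lemma zp_semipos {ι : Type} [Fintype ι] [DecidableEq ι] (A : Matrix ι ι ℝ)
    (hz : ∀ i j, i ≠ j → A i j ≤ 0) (hp : PMinors A) :
    ∃ d : ι → ℝ, (∀ i, 0 < d i) ∧ ∀ i, 0 < ∑ j, A i j * d j :=
  zp_aux (Fintype.card ι) ι rfl A hz hp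

lemma euclidProj_mem (pm x : ℝ) (hpm : 0 ≤ pm) : euclidProj 0 pm x ∈ Set.Icc (0:ℝ) pm :=
  ⟨le_max_left _ _, max_le hpm (min_le_left _ _)⟩

lemma euclidProj_lipschitz (lo hi x y : ℝ) :
    |euclidProj lo hi x - euclidProj lo hi y| ≤ |x - y| := by
  unfold euclidProj
  calc |max lo (min hi x) - max lo (min hi y)|
      ≤ |min hi x - min hi y| := by
        have h := abs_max_sub_max_le_abs (min hi x) (min hi y) lo
        simpa [max_comm] using h
    _ ≤ |x - y| := by
        have h := abs_min_sub_min_le_max hi x hi y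
        simpa using h

lemma clamp_sign (pm u q : ℝ) (hq0 : 0 ≤ q) (hqpm : q ≤ pm) :
    (q - euclidProj 0 pm u) * (u - euclidProj 0 pm u) ≤ 0 := by
  have hpm : 0 ≤ pm := hq0.trans hqpm
  unfold euclidProj
  rcases le_total u 0 with h | h
  · rw [min_eq_right (h.trans hpm), max_eq_left h]
    simpa using mul_nonpos_of_nonneg_of_nonpos (by linarith) (by linarith)
  · rcases le_total u pm with h2 | h2
    · rw [min_eq_right h2, max_eq_right h]
      simp
    · rw [min_eq_left h2, max_eq_right hpm]
      exact mul_nonpos_of_nonpos_of_nonneg (by linarith) (by linarith)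

lemma scalar_max (c lm g pm : ℝ) (hc : 0 < c) (hlm : 0 < lm) (hg : 0 < g)
    (hpm : 0 ≤ pm) {q q' : ℝ} (hq0 : 0 ≤ q) (hqpm : q ≤ pm)
    (hq' : q' = euclidProj 0 pm (c / lm - 1 / g)) (hne : q ≠ q') :
    c * Real.log (1 + g * q) - lm * q < c * Real.log (1 + g * q') - lm * q' := by
  set u : ℝ := c / lm - 1 / g with hu
  have hq'mem : q' ∈ Set.Icc (0:ℝ) pm := hq' ▸ euclidProj_mem pm u hpm
  have h1pos : 0 < 1 + g * q := by nlinarith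
  have h1'pos : 0 < 1 + g * q' := by nlinarith [hq'mem.1]
  have hratio_ne : (1 + g * q) / (1 + g * q') ≠ 1 := by
    intro hcontra
    rw [div_eq_one_iff_eq h1'pos.ne'] at hcontra
    exact hne (by nlinarith)
  have hlog := Real.log_lt_sub_one_of_pos (div_pos h1pos h1'pos) hratio_ne
  rw [Real.log_div h1pos.ne' h1'pos.ne'] at hlog
  have hratio : (1 + g * q) / (1 + g * q') - 1 = g * (q - q') / (1 + g * q') := by
    field_simp
    ring
  have h2 : c * (Real.log (1 + g * q) - Real.log (1 + g * q'))
      < c * (g * (q - q') / (1 + g * q')) := by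
    rw [← hratio]
    exact mul_lt_mul_of_pos_left hlog hc
  have hsign : (q - q') * (u - q') ≤ 0 := hq' ▸ clamp_sign pm u q hq0 hqpm
  have h3 : c * (g * (q - q') / (1 + g * q')) - lm * (q - q')
      = lm * g * ((q - q') * (u - q')) / (1 + g * q') := by
    rw [hu]
    field_simp
    ring
  have h4 : lm * g * ((q - q') * (u - q')) / (1 + g * q') ≤ 0 := by
    apply div_nonpos_of_nonpos_of_nonneg _ h1'pos.le
    exact mul_nonpos_of_nonneg_of_nonpos (by positivity) hsign
  linarith


theorem parallelUpdate_tendsto_unique_NE (M : ℕ) (hM : 1 ≤ M) (W σ2 : ℝ)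
    (hW : 0 < W) (hσ2 : 0 < σ2) (α lam pmax : Fin M → ℝ)
    (a : Fin M → Fin M → ℝ)
    (hα : ∀ i, 0 < α i) (hlam : ∀ i, 0 < lam i) (hpmax : ∀ i, 0 < pmax i)
    (ha : ∀ i ℓ, 0 ≤ a i ℓ) (haii : ∀ i, 0 < a i i)
    (hQ : IsPMatrix (Qmat M W σ2 α pmax a))
    (pseq : ℕ → Fin M → ℝ) (h0 : pseq 0 ∈ stratBox M pmax)
    (hstep : ∀ s i, pseq (s + 1) i =
      euclidProj 0 (pmax i) (α i * W / lam i - 1 / gain M σ2 a (pseq s) i)) :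
    ∃ pstar : Fin M → ℝ,
      Filter.Tendsto pseq Filter.atTop (nhds pstar) ∧
      pstar ∈ stratBox M pmax ∧ IsNE M W σ2 α lam pmax a pstar ∧
      ∀ q : Fin M → ℝ,
        q ∈ stratBox M pmax → IsNE M W σ2 α lam pmax a q → q = pstar := by
  classical
  have hi0 : (⟨0, hM⟩ : Fin M) ∈ Finset.univ := Finset.mem_univ _
  have hFinNe : (Finset.univ : Finset (Fin M)).Nonempty := ⟨⟨0, hM⟩, hi0⟩
  -- Step 1: the weight vector from the P-matrix hypothesis
  have hQz : ∀ i j : Fin M, i ≠ j → Qmat M W σ2 α pmax a i j ≤ 0 := by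
    intro i j hij
    simp only [Qmat, if_neg hij]
    have h1 : 0 ≤ a i j / a j j := div_nonneg (ha i j) (haii j).le
    have h2 : 0 ≤ σ2⁻¹ * ∑ k, a j k * pmax k :=
      mul_nonneg (inv_nonneg.mpr hσ2.le)
        (Finset.sum_nonneg fun k _ => mul_nonneg (ha j k) (hpmax k).le)
    have hX : 0 ≤ α i * W * (a i j / a j j) := mul_nonneg (mul_nonneg (hα i).le hW.le) h1
    have h3 : (0:ℝ) ≤ 1 + σ2⁻¹ * ∑ k, a j k * pmax k := by linarith
    nlinarith [mul_nonneg hX h3]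
  obtain ⟨d, hdpos, hd⟩ := zp_semipos _ hQz hQ
  set w : Fin M → ℝ := fun j => d j / a j j with hw
  have hwpos : ∀ j, 0 < w j := fun j => div_pos (hdpos j) (haii j)
  have hkey : ∀ i, ∑ j ∈ Finset.univ.erase i, a i j * w j < a i i * w i := by
    intro i
    have h := hd i
    rw [← Finset.add_sum_erase _ _ (Finset.mem_univ i)] at h
    have hQii : Qmat M W σ2 α pmax a i i = α i * W := if_pos rfl
    have hterm : ∀ j ∈ Finset.univ.erase i,
        Qmat M W σ2 α pmax a i j * d j ≤ -(α i * W * (a i j * w j)) := by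
      intro j hj
      have hji : j ≠ i := (Finset.mem_erase.mp hj).1
      have hij : i ≠ j := hji.symm
      simp only [Qmat, if_neg hij]
      have hrw : a i j * w j = (a i j / a j j) * d j := by rw [hw]; ring
      rw [hrw]
      have hκ : 0 ≤ σ2⁻¹ * ∑ k, a j k * pmax k :=
        mul_nonneg (inv_nonneg.mpr hσ2.le)
          (Finset.sum_nonneg fun k _ => mul_nonneg (ha j k) (hpmax k).le)
      have hX : 0 ≤ α i * W * (a i j / a j j) * d j :=
        mul_nonneg (mul_nonneg (mul_nonneg (hα i).le hW.le)
          (div_nonneg (ha i j) (haii j).le)) (hdpos j).le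
      nlinarith [mul_nonneg hX hκ]
    have hsum : ∑ j ∈ Finset.univ.erase i, Qmat M W σ2 α pmax a i j * d j
        ≤ -(α i * W * ∑ j ∈ Finset.univ.erase i, a i j * w j) := by
      rw [Finset.mul_sum, ← Finset.sum_neg_distrib]
      exact Finset.sum_le_sum hterm
    have hαW : 0 < α i * W := mul_pos (hα i) hW
    have h2 : α i * W * (∑ j ∈ Finset.univ.erase i, a i j * w j) < α i * W * d i := by
      rw [hQii] at h
      linarith
    have h3 : (∑ j ∈ Finset.univ.erase i, a i j * w j) < d i :=
      lt_of_mul_lt_mul_left h2 hαW.le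
    have h4 : a i i * w i = d i := by
      simp only [hw]
      field_simp
      exact mul_div_cancel_left₀ _ (haii i).ne'
    rw [h4]
    exact h3
  -- θ : the contraction factor
  set θ : ℝ := Finset.univ.sup' hFinNe
    (fun i => (∑ j ∈ Finset.univ.erase i, a i j * w j) / (a i i * w i)) with hθ
  have hθlt : θ < 1 := by
    rw [hθ, Finset.sup'_lt_iff]
    intro i _
    rw [div_lt_one (mul_pos (haii i) (hwpos i))]
    exact hkey i
  have hθnn : 0 ≤ θ := by
    refine le_trans ?_ (Finset.le_sup'
      (fun i => (∑ j ∈ Finset.univ.erase i, a i j * w j) / (a i i * w i)) hi0)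
    exact div_nonneg (Finset.sum_nonneg fun j _ => mul_nonneg (ha _ j) (hwpos j).le)
      (mul_pos (haii _) (hwpos _)).le
  have hθsum : ∀ i, ∑ j ∈ Finset.univ.erase i, a i j * w j ≤ θ * (a i i * w i) := by
    intro i
    have h := Finset.le_sup'
      (fun i => (∑ j ∈ Finset.univ.erase i, a i j * w j) / (a i i * w i)) (Finset.mem_univ i)
    rw [div_le_iff₀ (mul_pos (haii i) (hwpos i))] at h
    rw [hθ]
    linarith
  -- the update map
  set Tmap : (Fin M → ℝ) → Fin M → ℝ := fun p i =>
    euclidProj 0 (pmax i)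
      (α i * W / lam i - ((∑ ℓ ∈ Finset.univ.erase i, a i ℓ * p ℓ) + σ2) / a i i) with hT
  have hTbox : ∀ p i, Tmap p i ∈ Set.Icc (0:ℝ) (pmax i) := fun p i =>
    euclidProj_mem (pmax i) _ (hpmax i).le
  have hdenpos : ∀ p, p ∈ stratBox M pmax → ∀ i,
      0 < (∑ ℓ ∈ Finset.univ.erase i, a i ℓ * p ℓ) + σ2 := by
    intro p hp i
    have h : 0 ≤ ∑ ℓ ∈ Finset.univ.erase i, a i ℓ * p ℓ :=
      Finset.sum_nonneg fun ℓ _ => mul_nonneg (ha i ℓ) (hp ℓ).1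
    linarith
  have hgainpos : ∀ p, p ∈ stratBox M pmax → ∀ i, 0 < gain M σ2 a p i :=
    fun p hp i => div_pos (haii i) (hdenpos p hp i)
  have hgain_eq : ∀ p, p ∈ stratBox M pmax → ∀ i,
      α i * W / lam i - 1 / gain M σ2 a p i
      = α i * W / lam i - ((∑ ℓ ∈ Finset.univ.erase i, a i ℓ * p ℓ) + σ2) / a i i := by
    intro p hp i
    rw [gain, one_div_div]
  have hstep' : ∀ s, pseq s ∈ stratBox M pmax → ∀ i, pseq (s+1) i = Tmap (pseq s) i := by
    intro s hps i
    rw [hstep s i, hgain_eq _ hps i, hT]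
  have hinbox : ∀ s, pseq s ∈ stratBox M pmax := by
    intro s
    induction s with
    | zero => exact h0
    | succ s ihs =>
      intro i
      rw [hstep' s ihs i]
      exact hTbox _ i
  -- contraction estimate
  have hcontr : ∀ (C : ℝ), 0 ≤ C → ∀ p q : Fin M → ℝ,
      (∀ ℓ, |p ℓ - q ℓ| ≤ C * w ℓ) → ∀ i, |Tmap p i - Tmap q i| ≤ θ * C * w i := by
    intro C hC p q hpq i
    have h1 : |Tmap p i - Tmap q i| ≤
        |(α i * W / lam i - ((∑ ℓ ∈ Finset.univ.erase i, a i ℓ * p ℓ) + σ2) / a i i)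
         - (α i * W / lam i - ((∑ ℓ ∈ Finset.univ.erase i, a i ℓ * q ℓ) + σ2) / a i i)| := by
      rw [hT]
      exact euclidProj_lipschitz _ _ _ _
    have h2 : (α i * W / lam i - ((∑ ℓ ∈ Finset.univ.erase i, a i ℓ * p ℓ) + σ2) / a i i)
         - (α i * W / lam i - ((∑ ℓ ∈ Finset.univ.erase i, a i ℓ * q ℓ) + σ2) / a i i)
        = ((∑ ℓ ∈ Finset.univ.erase i, a i ℓ * q ℓ)
            - (∑ ℓ ∈ Finset.univ.erase i, a i ℓ * p ℓ)) / a i i := by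
      ring
    have h3 : |(∑ ℓ ∈ Finset.univ.erase i, a i ℓ * q ℓ)
        - (∑ ℓ ∈ Finset.univ.erase i, a i ℓ * p ℓ)|
        ≤ C * ∑ ℓ ∈ Finset.univ.erase i, a i ℓ * w ℓ := by
      rw [← Finset.sum_sub_distrib]
      refine (Finset.abs_sum_le_sum_abs _ _).trans ?_
      rw [Finset.mul_sum]
      refine Finset.sum_le_sum fun ℓ _ => ?_
      have he : |a i ℓ * q ℓ - a i ℓ * p ℓ| = a i ℓ * |q ℓ - p ℓ| := by
        rw [← mul_sub, abs_mul, abs_of_nonneg (ha i ℓ)]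
      rw [he]
      calc a i ℓ * |q ℓ - p ℓ| ≤ a i ℓ * (C * w ℓ) :=
            mul_le_mul_of_nonneg_left (by rw [abs_sub_comm]; exact hpq ℓ) (ha i ℓ)
        _ = C * (a i ℓ * w ℓ) := by ring
    have h4 : C * (∑ ℓ ∈ Finset.univ.erase i, a i ℓ * w ℓ) ≤ C * (θ * (a i i * w i)) :=
      mul_le_mul_of_nonneg_left (hθsum i) hC
    have h5 : |Tmap p i - Tmap q i| ≤ C * (θ * (a i i * w i)) / a i i := by
      refine h1.trans ?_
      rw [h2, abs_div, abs_of_pos (haii i)]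
      exact div_le_div_of_nonneg_right (h3.trans h4) (haii i).le |>.trans (le_refl _)
    refine h5.trans (le_of_eq ?_)
    field_simp [(haii i).ne']
  -- geometric decay ⇒ convergence
  set C0 : ℝ := Finset.univ.sup' hFinNe (fun ℓ => |pseq 1 ℓ - pseq 0 ℓ| / w ℓ) with hC0
  have hC0nn : 0 ≤ C0 := by
    refine le_trans ?_ (Finset.le_sup' (fun ℓ => |pseq 1 ℓ - pseq 0 ℓ| / w ℓ) hi0)
    exact div_nonneg (abs_nonneg _) (hwpos _).le
  have hC0b : ∀ ℓ, |pseq 1 ℓ - pseq 0 ℓ| ≤ C0 * w ℓ := by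
    intro ℓ
    have h := Finset.le_sup' (fun ℓ => |pseq 1 ℓ - pseq 0 ℓ| / w ℓ) (Finset.mem_univ ℓ)
    rw [div_le_iff₀ (hwpos ℓ)] at h
    rw [hC0]
    linarith
  have hgeo : ∀ s ℓ, |pseq (s+1) ℓ - pseq s ℓ| ≤ (C0 * θ ^ s) * w ℓ := by
    intro s
    induction s with
    | zero => simpa using hC0b
    | succ s ihs =>
      intro ℓ
      rw [hstep' (s+1) (hinbox _) ℓ, hstep' s (hinbox _) ℓ]
      have h := hcontr (C0 * θ ^ s) (mul_nonneg hC0nn (pow_nonneg hθnn s))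
        (pseq (s+1)) (pseq s) ihs ℓ
      calc |Tmap (pseq (s+1)) ℓ - Tmap (pseq s) ℓ| ≤ θ * (C0 * θ ^ s) * w ℓ := h
        _ = (C0 * θ ^ (s+1)) * w ℓ := by ring
  have hcauchy : ∀ i, ∃ L, Filter.Tendsto (fun s => pseq s i) Filter.atTop (nhds L) := by
    intro i
    apply cauchySeq_tendsto_of_complete
    apply cauchySeq_of_le_geometric θ (C0 * w i) hθlt
    intro n
    rw [Real.dist_eq]
    calc |pseq n i - pseq (n+1) i| = |pseq (n+1) i - pseq n i| := abs_sub_comm _ _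
      _ ≤ (C0 * θ ^ n) * w i := hgeo n i
      _ = (C0 * w i) * θ ^ n := by ring
  choose pstar hpstar using hcauchy
  have htend : Filter.Tendsto pseq Filter.atTop (nhds pstar) := tendsto_pi_nhds.mpr hpstar
  have hpsbox : pstar ∈ stratBox M pmax := by
    intro i
    exact IsClosed.mem_of_tendsto isClosed_Icc (hpstar i)
      (Filter.Eventually.of_forall fun s => hinbox s i)
  -- limit is a fixed point
  have hTcont : ∀ i, Continuous (fun p : Fin M → ℝ => Tmap p i) := by
    intro i
    simp only [hT]
    unfold euclidProj
    apply Continuous.max continuous_const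
    apply Continuous.min continuous_const
    apply Continuous.sub continuous_const
    apply Continuous.div_const
    apply Continuous.add _ continuous_const
    exact continuous_finset_sum _ fun ℓ _ => continuous_const.mul (continuous_apply ℓ)
  have hfix : ∀ i, pstar i = Tmap pstar i := by
    intro i
    have h1 : Filter.Tendsto (fun s => pseq (s+1) i) Filter.atTop (nhds (pstar i)) :=
      (hpstar i).comp (Filter.tendsto_add_atTop_nat 1)
    have h3 : (fun s => pseq (s+1) i) = fun s => Tmap (pseq s) i :=
      funext fun s => hstep' s (hinbox s) i
    rw [h3] at h1
    have h2 : Filter.Tendsto (fun s => Tmap (pseq s) i) Filter.atTop (nhds (Tmap pstar i)) :=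
      ((hTcont i).tendsto pstar).comp htend
    exact tendsto_nhds_unique h1 h2
  -- fixed points vs Nash equilibria
  have hgain_update : ∀ p (i : Fin M) (x : ℝ),
      gain M σ2 a (Function.update p i x) i = gain M σ2 a p i := by
    intro p i x
    unfold gain
    congr 2
    refine Finset.sum_congr rfl fun ℓ hℓ => ?_
    rw [Function.update_of_ne (Finset.mem_erase.mp hℓ).1]
  have hpayoff_update : ∀ p (i : Fin M) (x : ℝ),
      payoff M W σ2 α lam a (Function.update p i x) i
      = α i * W * Real.log (1 + gain M σ2 a p i * x) - lam i * x := by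
    intro p i x
    unfold payoff
    rw [hgain_update, Function.update_self]
  have hproj_eq : ∀ p, p ∈ stratBox M pmax → ∀ i,
      Tmap p i = euclidProj 0 (pmax i)
        (α i * W / lam i - 1 / gain M σ2 a p i) := by
    intro p hp i
    rw [hT, hgain_eq _ hp i]
  have hNEof : ∀ p, p ∈ stratBox M pmax → (∀ i, p i = Tmap p i) →
      IsNE M W σ2 α lam pmax a p := by
    intro p hpb hfp i q hqIcc
    by_cases hqe : q = p i
    · rw [hqe, Function.update_eq_self]
    · have h := scalar_max (α i * W) (lam i) (gain M σ2 a p i) (pmax i)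
        (mul_pos (hα i) hW) (hlam i) (hgainpos p hpb i) (hpmax i).le
        hqIcc.1 hqIcc.2 ((hfp i).trans (hproj_eq p hpb i)) hqe
      rw [hpayoff_update]
      unfold payoff
      exact h.le
  have hfixofNE : ∀ p, p ∈ stratBox M pmax → IsNE M W σ2 α lam pmax a p →
      ∀ i, p i = Tmap p i := by
    intro p hpb hne i
    by_contra hne'
    have hq'mem : Tmap p i ∈ Set.Icc (0:ℝ) (pmax i) := hTbox p i
    have h := scalar_max (α i * W) (lam i) (gain M σ2 a p i) (pmax i)
      (mul_pos (hα i) hW) (hlam i) (hgainpos p hpb i) (hpmax i).le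
      (hpb i).1 (hpb i).2 (hproj_eq p hpb i) hne'
    have h2 := hne i (Tmap p i) hq'mem
    rw [hpayoff_update] at h2
    unfold payoff at h2
    linarith
  have huniq : ∀ p q : Fin M → ℝ, (∀ i, p i = Tmap p i) → (∀ i, q i = Tmap q i) →
      p = q := by
    intro p q hp hq
    set C : ℝ := Finset.univ.sup' hFinNe (fun ℓ => |p ℓ - q ℓ| / w ℓ) with hC
    have hCnn : 0 ≤ C := by
      refine le_trans ?_ (Finset.le_sup' (fun ℓ => |p ℓ - q ℓ| / w ℓ) hi0)
      exact div_nonneg (abs_nonneg _) (hwpos _).le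
    have hCb : ∀ ℓ, |p ℓ - q ℓ| ≤ C * w ℓ := by
      intro ℓ
      have h := Finset.le_sup' (fun ℓ => |p ℓ - q ℓ| / w ℓ) (Finset.mem_univ ℓ)
      rw [div_le_iff₀ (hwpos ℓ)] at h
      rw [hC]
      linarith
    have hcb2 : ∀ i, |p i - q i| ≤ θ * C * w i := by
      intro i
      rw [hp i, hq i]
      exact hcontr C hCnn p q hCb i
    have hCle : C ≤ θ * C := by
      rw [hC, Finset.sup'_le_iff]
      intro ℓ _
      rw [div_le_iff₀ (hwpos ℓ)]
      exact hcb2 ℓ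
    have hCz : C = 0 := by nlinarith
    funext i
    have h := hcb2 i
    rw [hCz] at h
    simp only [mul_zero, zero_mul] at h
    have : |p i - q i| ≤ 0 := by linarith
    have := abs_nonpos_iff.mp this
    linarith [sub_eq_zero.mp this]
  refine ⟨pstar, htend, hpsbox, hNEof pstar hpsbox hfix, ?_⟩
  intro q hqb hqNE
  exact huniq q pstar (hfixofNE q hqb hqNE) hfix
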